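/- arXiv:1801.06911 — 5 statements merged into one kernel-verified Lean document; each statement's English description precedes it below -/
import Mathlib

section
/- Let A be a left brace and B an A-module (satisfying (M1)-(M3)). Then the abelian group A ⊕ B with multiplication (a₁,b₁)·(a₂,b₂) := (a₁·a₂, a₁·b₂) is a left brace (the semidirect product A ⋉ B). -/
/-- A left brace multiplication on an additive abelian group. -/
structure LeftBraceMul (A : Type*) [AddCommGroup A] where
  mul : A → A → A
  add_distrib : ∀ a b c : A, mul a (b + c) = mul a b + mul a c
  comp : ∀ a b c : A, mul (mul a b + a + b) c = mul a (mul b c) + mul a c + mul b c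
  bij : ∀ a : A, Function.Bijective (fun x => mul a x + x)

section Aux

variable {A : Type*} [AddCommGroup A] (Br : LeftBraceMul A)

lemma LB_mul_zero (a : A) : Br.mul a 0 = 0 := by
  have h := Br.add_distrib a 0 0
  rw [add_zero] at h
  have : Br.mul a 0 + Br.mul a 0 = Br.mul a 0 + 0 := by rw [add_zero, ← h]
  exact ((add_left_cancel this)).symm ▸ rfl

lemma LB_zero_mul (c : A) : Br.mul 0 c = 0 := by
  have h := Br.comp 0 0 c
  rw [LB_mul_zero, add_zero, add_zero] at h
  apply (Br.bij 0).1
  show Br.mul 0 (Br.mul 0 c) + Br.mul 0 c = Br.mul 0 0 + 0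
  rw [LB_mul_zero, zero_add]
  have : Br.mul 0 (Br.mul 0 c) + Br.mul 0 c + Br.mul 0 c = 0 + Br.mul 0 c := by
    rw [← h, zero_add]
  have := add_right_cancel this
  rw [this]

/-- The group operation a ∘ b = a + b + a·b. -/
private def op (a b : A) : A := a + b + Br.mul a b

lemma LB_op_assoc (a b c : A) : op Br (op Br a b) c = op Br a (op Br b c) := by
  unfold op
  have h : Br.mul (Br.mul a b + a + b) c = Br.mul a (Br.mul b c) + Br.mul a c + Br.mul b c :=
    Br.comp a b c
  rw [show a + b + Br.mul a b = Br.mul a b + a + b from by abel, h,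
    Br.add_distrib, Br.add_distrib]
  abel

lemma LB_op_zero (a : A) : op Br a 0 = a := by
  unfold op; rw [LB_mul_zero, add_zero, add_zero]

lemma LB_zero_op (a : A) : op Br 0 a = a := by
  unfold op; rw [LB_zero_mul, add_zero, zero_add]

lemma LB_inv (a : A) : ∃ x : A, op Br a x = 0 ∧ op Br x a = 0 := by
  obtain ⟨x, hx⟩ := (Br.bij a).2 (-a)
  have hax : op Br a x = 0 := by
    unfold op
    simp only at hx
    rw [show a + x + Br.mul a x = (Br.mul a x + x) + a from by abel, hx]
    abel
  obtain ⟨x', hx'⟩ := (Br.bij x).2 (-x)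
  have hxx' : op Br x x' = 0 := by
    unfold op
    simp only at hx'
    rw [show x + x' + Br.mul x x' = (Br.mul x x' + x') + x from by abel, hx']
    abel
  have : x' = a := by
    have := LB_op_assoc Br a x x'
    rw [hax, LB_zero_op, hxx', LB_op_zero] at this
    exact this
  exact ⟨x, hax, this ▸ hxx'⟩

end Aux

/-- The semidirect product A ⋉ B of a left brace A with an A-module B is a
left brace. -/
theorem stmt_8 {A : Type*} [AddCommGroup A] (Br : LeftBraceMul A)
    {B : Type*} [AddCommGroup B] (smul : A → B → B)
    (M1 : ∀ x : B, smul 0 x = 0)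
    (M2 : ∀ a : A, ∀ x y : B, smul a (x + y) = smul a x + smul a y)
    (M3 : ∀ a b : A, ∀ x : B,
      smul (a + b + Br.mul a b) x = smul a x + smul b x + smul a (smul b x)) :
    ∃ S : LeftBraceMul (A × B),
      ∀ p q : A × B, S.mul p q = (Br.mul p.1 q.1, smul p.1 q.2) := by
  -- composition of the maps y ↦ a·y + y
  have hcomp : ∀ (a b : A) (y : B),
      smul a (smul b y + y) + (smul b y + y) = smul (op Br a b) y + y := by
    intro a b y
    rw [M2]
    unfold op
    rw [M3]
    abel
  -- bijectivity of y ↦ a·y + y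
  have hB : ∀ a : A, Function.Bijective (fun y : B => smul a y + y) := by
    intro a
    obtain ⟨x, hax, hxa⟩ := LB_inv Br a
    rw [Function.bijective_iff_has_inverse]
    refine ⟨fun y => smul x y + y, ?_, ?_⟩
    · intro y
      show smul x (smul a y + y) + (smul a y + y) = y
      rw [hcomp, hxa, M1, zero_add]
    · intro y
      show smul a (smul x y + y) + (smul x y + y) = y
      rw [hcomp, hax, M1, zero_add]
  refine ⟨{
    mul := fun p q => (Br.mul p.1 q.1, smul p.1 q.2)
    add_distrib := by
      intro a b c
      ext
      · exact Br.add_distrib a.1 b.1 c.1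
      · exact M2 a.1 b.2 c.2
    comp := by
      intro a b c
      ext
      · exact Br.comp a.1 b.1 c.1
      · show smul (Br.mul a.1 b.1 + a.1 + b.1) c.2
          = smul a.1 (smul b.1 c.2) + smul a.1 c.2 + smul b.1 c.2
        rw [show Br.mul a.1 b.1 + a.1 + b.1 = a.1 + b.1 + Br.mul a.1 b.1 from by abel,
          M3]
        abel
    bij := by
      intro a
      exact (Br.bij a.1).prodMap (hB a.1) }, fun p q => rfl⟩
end

section
/- Let p be a prime and let B^{p,p} be the left brace (ℤ/p)² with multiplication (x₁,y₁)·(x₂,y₂) = (y₁y₂,0). A group automorphism of (ℤ/p)² given by an invertible matrix [[a,b],[c,d]] is a brace automorphism of B^{p,p} if and only if c = 0 and a = d². -/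
/-- An invertible matrix [[a,b],[c,d]] gives a brace automorphism of B^{p,p}
iff c = 0 and a = d². -/
theorem stmt_11 (p : ℕ) (hp : p.Prime) (a b c d : ZMod p)
    (hinv : IsUnit (a * d - b * c)) :
    (∀ u v : ZMod p × ZMod p,
      ((fun w : ZMod p × ZMod p => (a * w.1 + b * w.2, c * w.1 + d * w.2))
          ((u.2 * v.2, 0)) =
        (((c * u.1 + d * u.2) * (c * v.1 + d * v.2)), (0 : ZMod p)))) ↔
    (c = 0 ∧ a = d ^ 2) := by
  constructor
  · intro h
    have h1 := h (0, 1) (0, 1)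
    simp [Prod.ext_iff] at h1
    obtain ⟨ha, hc⟩ := h1
    exact ⟨hc, by rw [ha]; ring⟩
  · rintro ⟨hc, ha⟩ u v
    simp [hc, ha, Prod.ext_iff]
    ring
end

section
/- Let p be a prime and B^{p²} the left brace ℤ/p² with multiplication x₁·x₂ = p·x₁·x₂. An additive automorphism of ℤ/p², given by multiplication by a unit u ∈ (ℤ/p²)ˣ, is a brace automorphism of B^{p²} if and only if u ≡ 1 (mod p). -/
lemma key (p : ℕ) (hp : p.Prime) (x : ZMod (p ^ 2)) :
    (p : ZMod (p ^ 2)) * x = 0 ↔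
      ZMod.castHom (dvd_pow_self p two_ne_zero) (ZMod p) x = 0 := by
  haveI : NeZero (p ^ 2) := ⟨pow_ne_zero 2 hp.ne_zero⟩
  have hx : ((x.val : ℕ) : ZMod (p ^ 2)) = x := ZMod.natCast_zmod_val x
  have hcast : ZMod.castHom (dvd_pow_self p two_ne_zero) (ZMod p) x
      = ((x.val : ℕ) : ZMod p) := by
    rw [ZMod.castHom_apply, ← ZMod.natCast_val]
  rw [hcast, ZMod.natCast_eq_zero_iff]
  conv_lhs => rw [← hx]
  rw [← Nat.cast_mul, ZMod.natCast_eq_zero_iff]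
  generalize x.val = m
  rw [pow_two, mul_dvd_mul_iff_left (by exact_mod_cast hp.ne_zero : (p:ℕ) ≠ 0)]

/-- Multiplication by a unit u of ℤ/p² is a brace automorphism of B^{p²}
iff u ≡ 1 (mod p). -/
theorem stmt_12 (p : ℕ) (hp : p.Prime) (u : (ZMod (p ^ 2))ˣ) :
    (∀ x y : ZMod (p ^ 2),
      (u : ZMod (p ^ 2)) * ((p : ZMod (p ^ 2)) * x * y)
        = (p : ZMod (p ^ 2)) * ((u : ZMod (p ^ 2)) * x) * ((u : ZMod (p ^ 2)) * y)) ↔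
    ZMod.castHom (dvd_pow_self p two_ne_zero) (ZMod p) (u : ZMod (p ^ 2)) = 1 := by
  set v : ZMod (p ^ 2) := (u : ZMod (p ^ 2)) with hv
  have hiff : (p : ZMod (p ^ 2)) * (v - 1) = 0 ↔
      ZMod.castHom (dvd_pow_self p two_ne_zero) (ZMod p) v = 1 := by
    rw [key p hp (v - 1), map_sub, map_one, sub_eq_zero]
  constructor
  · intro h
    rw [← hiff]
    have h11 := h 1 1
    simp only [mul_one] at h11
    have h2 : (p : ZMod (p ^ 2)) * (v - 1) * v = 0 := by linear_combination -h11
    have hvinv : v * ((u⁻¹ : (ZMod (p ^ 2))ˣ) : ZMod (p ^ 2)) = 1 := u.mul_inv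
    linear_combination ((u⁻¹ : (ZMod (p ^ 2))ˣ) : ZMod (p ^ 2)) * h2
      - (p : ZMod (p ^ 2)) * (v - 1) * hvinv
  · intro h x y
    have h0 : (p : ZMod (p ^ 2)) * v = p := by
      have := hiff.mpr h
      linear_combination this
    calc v * ((p : ZMod (p ^ 2)) * x * y) = ((p : ZMod (p ^ 2)) * v) * x * y := by ring
    _ = (p : ZMod (p ^ 2)) * x * y := by rw [h0]
    _ = ((p : ZMod (p ^ 2)) * v) * v * x * y := by rw [h0, h0]
    _ = (p : ZMod (p ^ 2)) * (v * x) * (v * y) := by ring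
end

section
/- Let p be an odd prime. The map γ: ℤ/p² → ℤ/p², γ(x) = x − p·C(x,2) (where C(x,2) = x(x−1)/2 computed from any integer representative) is a group isomorphism from the adjoint group of the brace B^{p²} (operation x∘y = x + y + p·x·y) to the additive group ℤ/p². -/
/-- For odd p, γ(x) = x − p·C(x,2) is a group isomorphism from the adjoint
group of B^{p²} (operation x∘y = x+y+p·x·y) to the additive group ℤ/p². -/
theorem stmt_13 (p : ℕ) (hp : p.Prime) (hodd : p ≠ 2) :
    Function.Bijective
      (fun x : ZMod (p ^ 2) => x - (p : ZMod (p ^ 2)) * (Nat.choose x.val 2 : ZMod (p ^ 2))) ∧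
    ∀ x y : ZMod (p ^ 2),
      (fun x : ZMod (p ^ 2) => x - (p : ZMod (p ^ 2)) * (Nat.choose x.val 2 : ZMod (p ^ 2)))
          (x + y + (p : ZMod (p ^ 2)) * x * y)
        = (fun x : ZMod (p ^ 2) => x - (p : ZMod (p ^ 2)) * (Nat.choose x.val 2 : ZMod (p ^ 2))) x
          + (fun x : ZMod (p ^ 2) => x - (p : ZMod (p ^ 2)) * (Nat.choose x.val 2 : ZMod (p ^ 2))) y := by
  haveI : NeZero (p ^ 2) := ⟨pow_ne_zero 2 hp.ne_zero⟩
  set R := ZMod (p ^ 2)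
  -- p² = 0 in R
  have hp2 : (p : R) ^ 2 = 0 := by
    have h := ZMod.natCast_self (p ^ 2)
    push_cast at h
    exact h
  -- 2 is a unit in R
  have hu : IsUnit (2 : R) := by
    have hco : Nat.Coprime 2 (p ^ 2) := by
      have : Nat.Coprime 2 p := Nat.coprime_two_left.mpr (hp.odd_of_ne_two hodd)
      exact this.pow_right 2
    have := (ZMod.isUnit_iff_coprime 2 (p ^ 2)).mpr hco
    simpa using this
  have h2 : ∀ u v : R, 2 * u = 2 * v → u = v := fun u v h => hu.mul_left_cancel h
  -- key identity: 2 * C(x,2) = x*(x-1) in R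
  have hC : ∀ x : R, (2 : R) * ((Nat.choose x.val 2 : ℕ) : R) = x * (x - 1) := by
    intro x
    have hn : 2 * Nat.choose x.val 2 = x.val * (x.val - 1) := by
      rw [Nat.choose_two_right]
      refine Nat.mul_div_cancel' ?_
      rcases Nat.even_or_odd x.val with h | h
      · exact (h.mul_right _).two_dvd
      · exact ((Nat.Odd.sub_odd h odd_one).mul_left _).two_dvd
    rcases Nat.eq_zero_or_pos x.val with h0 | h1
    · have hx : x = 0 := by
        rwa [ZMod.val_eq_zero] at h0
      simp [hx, h0]
    · have : ((2 * Nat.choose x.val 2 : ℕ) : R) = ((x.val * (x.val - 1) : ℕ) : R) := by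
        rw [hn]
      push_cast [Nat.cast_sub h1] at this
      have h3 := congrArg (Nat.cast : ℕ → ZMod (p ^ 2)) hn
      push_cast [Nat.cast_sub h1] at h3
      rw [ZMod.natCast_zmod_val] at h3
      exact h3
  constructor
  · rw [← Finite.injective_iff_bijective]
    intro a b h
    simp only at h
    have hE : (2 : R) * (a - b) = (p : R) * ((a - b) * (a + b - 1)) := by
      linear_combination 2 * h + (p : R) * hC a - (p : R) * hC b
    have hpab : (p : R) * (a - b) = 0 := by
      refine h2 _ 0 ?_
      linear_combination (p : R) * hE + ((a - b) * (a + b - 1)) * hp2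
    have hab : 2 * a = 2 * b := by
      linear_combination hE + (a + b - 1) * hpab
    exact h2 a b hab
  · intro x y
    simp only
    refine h2 _ _ ?_
    linear_combination (-(p : R)) * hC (x + y + (p : R) * x * y) + (p : R) * hC x
      + (p : R) * hC y + (x * y - 2 * x * y * (x + y) - (p : R) * x ^ 2 * y ^ 2) * hp2
end

section
/- Let A be a finite left brace whose additive group decomposes as A = B ⊕ C with B, C left ideals, and suppose C is an ideal contained in Soc(A). Then for a₁ = b₁ + c₁ and a₂ = b₂ + c₂ with bᵢ ∈ B, cᵢ ∈ C, one has a₁·a₂ = b₁·b₂ + b₁·c₂, where b₁·b₂ ∈ B and b₁·c₂ ∈ C; in particular A is isomorphic as a brace to the external semidirect product B ⋉ C. -/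
/-- If A = B ⊕ C with B, C left ideals and C an ideal contained in the socle,
then (b₁+c₁)·(b₂+c₂) = b₁·b₂ + b₁·c₂ with b₁·b₂ ∈ B, b₁·c₂ ∈ C; in particular
A is the (internal = external) semidirect product B ⋉ C. -/
theorem stmt_18 {A : Type*} [AddCommGroup A] [Fintype A] (Br : LeftBraceMul A)
    (B C : AddSubgroup A)
    (hBleft : ∀ a : A, ∀ x ∈ B, Br.mul a x ∈ B)
    (hCleft : ∀ a : A, ∀ x ∈ C, Br.mul a x ∈ C)
    (hCright : ∀ x ∈ C, ∀ a : A, Br.mul x a ∈ C)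
    (hCsoc : ∀ x ∈ C, ∀ a : A, Br.mul x a = 0)
    (hcompl : IsCompl B C) :
    (∀ b₁ ∈ B, ∀ c₁ ∈ C, ∀ b₂ ∈ B, ∀ c₂ ∈ C,
      Br.mul (b₁ + c₁) (b₂ + c₂) = Br.mul b₁ b₂ + Br.mul b₁ c₂ ∧
      Br.mul b₁ b₂ ∈ B ∧ Br.mul b₁ c₂ ∈ C) ∧
    Function.Bijective (fun w : B × C => (w.1 : A) + (w.2 : A)) := by
  constructor
  · intro b₁ hb₁ c₁ hc₁ b₂ hb₂ c₂ hc₂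
    have key : ∀ x : A, Br.mul (b₁ + c₁) x = Br.mul b₁ x := by
      intro x
      have h := Br.comp c₁ b₁ x
      rw [hCsoc c₁ hc₁ b₁, hCsoc c₁ hc₁ x, hCsoc c₁ hc₁ (Br.mul b₁ x)] at h
      simpa [add_comm] using h
    refine ⟨?_, hBleft b₁ b₂ hb₂, hCleft b₁ c₂ hc₂⟩
    rw [Br.add_distrib, key b₂, key c₂]
  · constructor
    · rintro ⟨b, c⟩ ⟨b', c'⟩ h
      simp only at h
      have hbc : (b : A) - b' = (c' : A) - c := by
        rw [sub_eq_sub_iff_add_eq_add, h]; abel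
      have hmem : (b : A) - b' ∈ B ⊓ C := by
        rw [AddSubgroup.mem_inf]
        exact ⟨sub_mem b.2 b'.2, hbc ▸ sub_mem c'.2 c.2⟩
      rw [hcompl.inf_eq_bot, AddSubgroup.mem_bot] at hmem
      have hb : (b : A) = b' := sub_eq_zero.mp hmem
      have hc : (c : A) = c' := (sub_eq_zero.mp (hbc ▸ hmem)).symm
      ext <;> simp [hb, hc]
    · intro a
      have : a ∈ B ⊔ C := by rw [hcompl.sup_eq_top]; trivial
      obtain ⟨y, hy, z, hz, rfl⟩ := AddSubgroup.mem_sup.mp this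
      exact ⟨(⟨y, hy⟩, ⟨z, hz⟩), rfl⟩
end
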